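/- arXiv:0804.3678 — 2 statements merged into one kernel-verified Lean document; each statement's English description precedes it below -/
import Mathlib

section
/- Let J be a random variable uniform on {1,...,ℓ} and X, Y random variables on finite sets such that, conditionally on J = j, Y has law Q_j and X is obtained from Y by applying a stochastic matrix A_j, where the matrices A_j take only d distinct values B_1, ..., B_d. Then the Shannon mutual informations satisfy I(X:J) ≤ I(Y:J) + log₂ d. -/
open Finset

/-- Shannon entropy (base 2) of a finite nonnegative vector. -/
noncomputable def ent2 {n : ℕ} (v : Fin n → ℝ) : ℝ :=
  -∑ i, v i * Real.logb 2 (v i)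

/-- The log-sum inequality. -/
lemma log_sum_ineq {ι : Type*} (s : Finset ι) (a b : ι → ℝ)
    (ha : ∀ i ∈ s, 0 ≤ a i) (hb : ∀ i ∈ s, 0 ≤ b i)
    (hab : ∀ i ∈ s, b i = 0 → a i = 0) :
    (∑ i ∈ s, a i) * Real.log ((∑ i ∈ s, a i) / (∑ i ∈ s, b i))
      ≤ ∑ i ∈ s, a i * Real.log (a i / b i) := by
  classical
  by_cases hS : ∑ i ∈ s, b i = 0
  · have hb0 : ∀ i ∈ s, b i = 0 := (Finset.sum_eq_zero_iff_of_nonneg hb).mp hS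
    have ha0 : ∀ i ∈ s, a i = 0 := fun i hi => hab i hi (hb0 i hi)
    have hA : ∑ i ∈ s, a i = 0 := Finset.sum_eq_zero ha0
    have hR : ∑ i ∈ s, a i * Real.log (a i / b i) = 0 := by
      refine Finset.sum_eq_zero fun i hi => ?_
      rw [ha0 i hi, zero_mul]
    rw [hA, hR, zero_mul]
  · set Sb := ∑ i ∈ s, b i with hSb
    have hSbpos : 0 < Sb := lt_of_le_of_ne (Finset.sum_nonneg hb) (Ne.symm hS)
    set t := s.filter (fun i => b i ≠ 0) with htdef
    have hbt : ∑ i ∈ t, b i = Sb := Finset.sum_filter_of_ne (fun i _ h => h)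
    have hat : ∑ i ∈ t, a i = ∑ i ∈ s, a i :=
      Finset.sum_filter_of_ne (fun i hi h => fun hb0 => h (hab i hi hb0))
    have hmemt : ∀ i ∈ t, i ∈ s ∧ b i ≠ 0 := fun i hi => Finset.mem_filter.mp hi
    have jensen := Real.convexOn_mul_log.map_sum_le (t := t)
      (w := fun i => b i / Sb) (p := fun i => a i / b i)
      (fun i hi => div_nonneg (hb i (hmemt i hi).1) hSbpos.le)
      (by rw [← Finset.sum_div, hbt, div_self hS])
      (fun i hi => Set.mem_Ici.mpr (div_nonneg (ha i (hmemt i hi).1) (hb i (hmemt i hi).1)))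
    have hwp : ∑ i ∈ t, (b i / Sb) • (a i / b i) = (∑ i ∈ s, a i) / Sb := by
      rw [← hat, Finset.sum_div]
      refine Finset.sum_congr rfl fun i hi => ?_
      obtain ⟨his, hbi⟩ := hmemt i hi
      rw [smul_eq_mul, div_mul_div_comm, mul_comm (b i), mul_div_mul_right _ _ hbi]
    rw [hwp] at jensen
    have key : (∑ i ∈ s, a i) / Sb * Real.log ((∑ i ∈ s, a i) / Sb)
        ≤ (∑ i ∈ t, a i * Real.log (a i / b i)) / Sb := by
      refine jensen.trans_eq ?_
      rw [Finset.sum_div]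
      refine Finset.sum_congr rfl fun i hi => ?_
      obtain ⟨his, hbi⟩ := hmemt i hi
      simp only [smul_eq_mul]
      field_simp
    have htRs : ∑ i ∈ t, a i * Real.log (a i / b i) = ∑ i ∈ s, a i * Real.log (a i / b i) :=
      Finset.sum_filter_of_ne (fun i hi h => by
        intro hb0
        exact h (by rw [hab i hi hb0]; ring))
    rw [htRs] at key
    have := mul_le_mul_of_nonneg_left key hSbpos.le
    calc (∑ i ∈ s, a i) * Real.log ((∑ i ∈ s, a i) / Sb)
        = Sb * ((∑ i ∈ s, a i) / Sb * Real.log ((∑ i ∈ s, a i) / Sb)) := by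
          field_simp
      _ ≤ Sb * ((∑ i ∈ s, a i * Real.log (a i / b i)) / Sb) := this
      _ = ∑ i ∈ s, a i * Real.log (a i / b i) := by field_simp

lemma mulVec_apply {m n : ℕ} (M : Matrix (Fin m) (Fin n) ℝ) (u : Fin n → ℝ) (i : Fin m) :
    M.mulVec u i = ∑ j, M i j * u j := by
  simp [Matrix.mulVec, dotProduct]

/-- Data processing inequality for relative entropy, for a column-stochastic matrix. -/
lemma dpi_kl {nX nY : ℕ} (B : Matrix (Fin nX) (Fin nY) ℝ)
    (hB0 : ∀ x y, 0 ≤ B x y) (hB1 : ∀ y, ∑ x, B x y = 1)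
    (p q : Fin nY → ℝ) (hp : ∀ y, 0 ≤ p y) (hq : ∀ y, 0 ≤ q y)
    (hpq : ∀ y, q y = 0 → p y = 0) :
    ∑ x, B.mulVec p x * Real.log (B.mulVec p x / B.mulVec q x)
      ≤ ∑ y, p y * Real.log (p y / q y) := by
  have key : ∀ x, B.mulVec p x * Real.log (B.mulVec p x / B.mulVec q x)
      ≤ ∑ y, B x y * p y * Real.log (B x y * p y / (B x y * q y)) := by
    intro x
    have := log_sum_ineq Finset.univ (fun y => B x y * p y) (fun y => B x y * q y)
      (fun y _ => mul_nonneg (hB0 x y) (hp y)) (fun y _ => mul_nonneg (hB0 x y) (hq y))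
      (fun y _ h => by
        show B x y * p y = 0
        rcases mul_eq_zero.mp h with h' | h'
        · rw [h']; ring
        · rw [hpq y h']; ring)
    simpa [Matrix.mulVec, dotProduct] using this
  calc ∑ x, B.mulVec p x * Real.log (B.mulVec p x / B.mulVec q x)
      ≤ ∑ x, ∑ y, B x y * p y * Real.log (B x y * p y / (B x y * q y)) :=
        Finset.sum_le_sum (fun x _ => key x)
    _ = ∑ y, ∑ x, B x y * (p y * Real.log (p y / q y)) := by
        rw [Finset.sum_comm]
        refine Finset.sum_congr rfl fun y _ => Finset.sum_congr rfl fun x _ => ?_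
        by_cases hB : B x y = 0
        · simp [hB]
        · by_cases hpy : p y = 0
          · simp [hpy]
          · have hqy : q y ≠ 0 := fun h => hpy (hpq y h)
            rw [mul_div_mul_left _ _ hB]
            ring
    _ = ∑ y, p y * Real.log (p y / q y) := by
        refine Finset.sum_congr rfl fun y _ => ?_
        rw [← Finset.sum_mul, hB1 y, one_mul]

lemma ent2_eq {n : ℕ} (v : Fin n → ℝ) :
    ent2 v = -(∑ i, v i * Real.log (v i)) / Real.log 2 := by
  unfold ent2
  rw [neg_div, Finset.sum_div]
  congr 1
  exact Finset.sum_congr rfl fun i _ => by rw [← Real.log_div_log, mul_div_assoc]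

lemma kl_expand {m n : ℕ} {L : ℝ} (hL : 0 < L) (P : Fin m → Fin n → ℝ)
    (hP0 : ∀ j x, 0 ≤ P j x) (Pb : Fin n → ℝ) (hPb : ∀ x, Pb x = (∑ j, P j x) / L) :
    ∑ j, ∑ x, P j x * Real.log (P j x / Pb x)
      = (∑ j, ∑ x, P j x * Real.log (P j x)) - L * ∑ x, Pb x * Real.log (Pb x) := by
  have hLPb : ∀ x, L * Pb x = ∑ j, P j x := fun x => by rw [hPb]; field_simp
  have hterm : ∀ j x, P j x * Real.log (P j x / Pb x)
      = P j x * Real.log (P j x) - P j x * Real.log (Pb x) := by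
    intro j x
    by_cases h0 : P j x = 0
    · simp [h0]
    · have hp : 0 < P j x := lt_of_le_of_ne (hP0 j x) (Ne.symm h0)
      have hPbx : 0 < Pb x := by
        rw [hPb x]
        exact div_pos (lt_of_lt_of_le hp
          (Finset.single_le_sum (fun j' _ => hP0 j' x) (Finset.mem_univ j))) hL
      rw [Real.log_div h0 hPbx.ne']
      ring
  calc ∑ j, ∑ x, P j x * Real.log (P j x / Pb x)
      = ∑ j, ∑ x, (P j x * Real.log (P j x) - P j x * Real.log (Pb x)) :=
        Finset.sum_congr rfl fun j _ => Finset.sum_congr rfl fun x _ => hterm j x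
    _ = (∑ j, ∑ x, P j x * Real.log (P j x)) - ∑ j, ∑ x, P j x * Real.log (Pb x) := by
        rw [← Finset.sum_sub_distrib]
        exact Finset.sum_congr rfl fun j _ => Finset.sum_sub_distrib _ _
    _ = (∑ j, ∑ x, P j x * Real.log (P j x)) - L * ∑ x, Pb x * Real.log (Pb x) := by
        congr 1
        rw [Finset.sum_comm, Finset.mul_sum]
        refine Finset.sum_congr rfl fun x _ => ?_
        rw [← Finset.sum_mul, ← hLPb x]
        ring

lemma key_ineq (ℓ d nX nY : ℕ) (hℓ : 0 < ℓ) (hd : 0 < d)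
    (Q : Fin ℓ → Fin nY → ℝ)
    (hQ0 : ∀ j y, 0 ≤ Q j y) (hQ1 : ∀ j, ∑ y, Q j y = 1)
    (B : Fin d → Matrix (Fin nX) (Fin nY) ℝ) (r : Fin ℓ → Fin d)
    (hB0 : ∀ j x y, 0 ≤ B (r j) x y) (hB1 : ∀ j y, ∑ x, B (r j) x y = 1)
    (P : Fin ℓ → Fin nX → ℝ) (hP : ∀ j x, P j x = (B (r j)).mulVec (Q j) x)
    (Pb : Fin nX → ℝ) (hPb : ∀ x, Pb x = (∑ j, P j x) / ℓ)
    (pb : Fin nY → ℝ) (hpb : ∀ y, pb y = (∑ j, Q j y) / ℓ) :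
    ∑ j, ∑ x, P j x * Real.log (P j x / Pb x)
      ≤ (∑ j, ∑ y, Q j y * Real.log (Q j y / pb y)) + ℓ * Real.log d := by
  classical
  have hL : (0:ℝ) < ℓ := by exact_mod_cast hℓ
  have hd' : (0:ℝ) < d := by exact_mod_cast hd
  obtain ⟨S, hSdef⟩ : ∃ S : Fin d → Finset (Fin ℓ),
      ∀ k, S k = univ.filter (fun j => r j = k) := ⟨_, fun _ => rfl⟩
  obtain ⟨c, hcdef⟩ : ∃ c : Fin d → ℝ, ∀ k, c k = ((S k).card : ℝ) := ⟨_, fun _ => rfl⟩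
  obtain ⟨v, hvdef⟩ : ∃ v : Fin d → Fin nY → ℝ,
      ∀ k y, v k y = (∑ j ∈ S k, Q j y) / c k := ⟨_, fun _ _ => rfl⟩
  obtain ⟨w, hwdef⟩ : ∃ w : Fin d → Fin nX → ℝ,
      ∀ k x, w k x = ∑ y, B k x y * v k y := ⟨_, fun _ _ => rfl⟩
  have hmem : ∀ k, ∀ j ∈ S k, r j = k := by
    intro k j hj
    rw [hSdef] at hj
    exact (Finset.mem_filter.mp hj).2
  have hc0 : ∀ k, 0 ≤ c k := fun k => by rw [hcdef]; positivity
  have hckpos : ∀ k, (S k).Nonempty → 0 < c k := fun k hne => by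
    rw [hcdef]
    exact_mod_cast Finset.card_pos.mpr hne
  have hPx : ∀ j x, P j x = ∑ y, B (r j) x y * Q j y := fun j x => by
    rw [hP, mulVec_apply]
  have hP0 : ∀ j x, 0 ≤ P j x := fun j x => by
    rw [hPx]
    exact Finset.sum_nonneg fun y _ => mul_nonneg (hB0 j x y) (hQ0 j y)
  have hv0 : ∀ k y, 0 ≤ v k y := fun k y => by
    rw [hvdef]
    exact div_nonneg (Finset.sum_nonneg fun j _ => hQ0 j y) (hc0 k)
  have hpb0 : ∀ y, 0 ≤ pb y := fun y => by
    rw [hpb]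
    exact div_nonneg (Finset.sum_nonneg fun j _ => hQ0 j y) hL.le
  have hPb0 : ∀ x, 0 ≤ Pb x := fun x => by
    rw [hPb]
    exact div_nonneg (Finset.sum_nonneg fun j _ => hP0 j x) hL.le
  have hB0' : ∀ k, ∀ j ∈ S k, ∀ x y, 0 ≤ B k x y := by
    intro k j hj x y
    rw [← hmem k j hj]
    exact hB0 j x y
  have hvempty : ∀ k, S k = ∅ → ∀ y, v k y = 0 := by
    intro k he y
    rw [hvdef, he]
    simp
  have hw0 : ∀ k x, 0 ≤ w k x := fun k x => by
    rw [hwdef]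
    refine Finset.sum_nonneg fun y _ => ?_
    rcases Finset.eq_empty_or_nonempty (S k) with he | ⟨j, hj⟩
    · rw [hvempty k he y, mul_zero]
    · exact mul_nonneg (hB0' k j hj x y) (hv0 k y)
  have hcv : ∀ k y, c k * v k y = ∑ j ∈ S k, Q j y := by
    intro k y
    rcases Finset.eq_empty_or_nonempty (S k) with he | hne
    · rw [hvempty k he y, mul_zero, he, Finset.sum_empty]
    · rw [hvdef]
      exact mul_div_cancel₀ _ (hckpos k hne).ne'
  have hcw : ∀ k x, c k * w k x = ∑ j ∈ S k, P j x := by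
    intro k x
    have h1 : ∑ j ∈ S k, P j x = ∑ y, ∑ j ∈ S k, B k x y * Q j y := by
      rw [Finset.sum_comm]
      refine Finset.sum_congr rfl fun j hj => ?_
      rw [hPx j x, hmem k j hj]
    rw [h1, hwdef, Finset.mul_sum]
    refine Finset.sum_congr rfl fun y _ => ?_
    rw [← Finset.mul_sum, ← hcv k y]
    ring
  have habs_v : ∀ k, ∀ j ∈ S k, ∀ y, v k y = 0 → Q j y = 0 := by
    intro k j hj y hvy
    have h0 : ∑ j' ∈ S k, Q j' y = 0 := by rw [← hcv k y, hvy, mul_zero]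
    exact (Finset.sum_eq_zero_iff_of_nonneg (fun j' _ => hQ0 j' y)).mp h0 j hj
  have habs_pb : ∀ y, pb y = 0 → ∀ j, Q j y = 0 := by
    intro y h j
    have h' : (∑ j', Q j' y) / (ℓ:ℝ) = 0 := by rw [← hpb y, h]
    have h0 : ∑ j', Q j' y = 0 := by
      rcases div_eq_zero_iff.mp h' with h'' | h''
      · exact h''
      · exact absurd h'' hL.ne'
    exact (Finset.sum_eq_zero_iff_of_nonneg (fun j' _ => hQ0 j' y)).mp h0 j (Finset.mem_univ j)
  have habs_pbv : ∀ k y, pb y = 0 → v k y = 0 := by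
    intro k y h
    rw [hvdef]
    rw [Finset.sum_eq_zero fun j _ => habs_pb y h j]
    exact zero_div _
  have hone : ∑ j : Fin ℓ, (1:ℝ) = (ℓ:ℝ) := by
    rw [Finset.sum_const, Finset.card_univ, Fintype.card_fin, nsmul_eq_mul, mul_one]
  have hpbs : ∑ y, pb y = 1 := by
    calc ∑ y, pb y = ∑ y, (∑ j, Q j y) / (ℓ:ℝ) := Finset.sum_congr rfl fun y _ => hpb y
      _ = (∑ y, ∑ j, Q j y) / (ℓ:ℝ) := by rw [Finset.sum_div]
      _ = (∑ j, ∑ y, Q j y) / (ℓ:ℝ) := by rw [Finset.sum_comm]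
      _ = (∑ j : Fin ℓ, (1:ℝ)) / (ℓ:ℝ) := by
          rw [Finset.sum_congr rfl fun j _ => hQ1 j]
      _ = 1 := by rw [hone]; exact div_self hL.ne'
  have hvs : ∀ k, (S k).Nonempty → ∑ y, v k y = 1 := by
    intro k hne
    have hck := hckpos k hne
    calc ∑ y, v k y = ∑ y, (∑ j ∈ S k, Q j y) / c k :=
          Finset.sum_congr rfl fun y _ => hvdef k y
      _ = (∑ y, ∑ j ∈ S k, Q j y) / c k := by rw [Finset.sum_div]
      _ = (∑ j ∈ S k, ∑ y, Q j y) / c k := by rw [Finset.sum_comm]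
      _ = (∑ j ∈ S k, (1:ℝ)) / c k := by
          rw [Finset.sum_congr rfl fun j _ => hQ1 j]
      _ = 1 := by
          rw [Finset.sum_const, nsmul_eq_mul, mul_one, ← hcdef]
          exact div_self hck.ne'
  have hB1' : ∀ k, (S k).Nonempty → ∀ y, ∑ x, B k x y = 1 := by
    intro k hne y
    obtain ⟨j, hj⟩ := hne
    rw [← hmem k j hj]
    exact hB1 j y
  have hws : ∀ k, (S k).Nonempty → ∑ x, w k x = 1 := by
    intro k hne
    calc ∑ x, w k x = ∑ x, ∑ y, B k x y * v k y :=
          Finset.sum_congr rfl fun x _ => hwdef k x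
      _ = ∑ y, (∑ x, B k x y) * v k y := by
          rw [Finset.sum_comm]
          exact Finset.sum_congr rfl fun y _ => (Finset.sum_mul _ _ _).symm
      _ = ∑ y, v k y := by
          refine Finset.sum_congr rfl fun y _ => ?_
          rw [hB1' k hne y, one_mul]
      _ = 1 := hvs k hne
  have hLPb : ∀ x, (ℓ:ℝ) * Pb x = ∑ j, P j x := fun x => by
    rw [hPb]
    exact mul_div_cancel₀ _ hL.ne'
  have hsubset : ∀ k x, ∑ j ∈ S k, P j x ≤ ∑ j, P j x := fun k x =>
    Finset.sum_le_sum_of_subset_of_nonneg (Finset.subset_univ _) (fun j _ _ => hP0 j x)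
  -- partition identities
  have stepPartX : ∑ k, ∑ j ∈ S k, (∑ x, P j x * Real.log (P j x / Pb x))
      = ∑ j, ∑ x, P j x * Real.log (P j x / Pb x) := by
    have h := Finset.sum_fiberwise (univ : Finset (Fin ℓ)) r
      (fun j => ∑ x, P j x * Real.log (P j x / Pb x))
    refine Eq.trans ?_ h
    exact Finset.sum_congr rfl fun k _ => by rw [hSdef]
  have stepPartY : ∑ k, ∑ j ∈ S k, (∑ y, Q j y * Real.log (Q j y / pb y))
      = ∑ j, ∑ y, Q j y * Real.log (Q j y / pb y) := by
    have h := Finset.sum_fiberwise (univ : Finset (Fin ℓ)) r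
      (fun j => ∑ y, Q j y * Real.log (Q j y / pb y))
    refine Eq.trans ?_ h
    exact Finset.sum_congr rfl fun k _ => by rw [hSdef]
  -- chain rule splittings
  have step2X : ∀ k, ∀ j ∈ S k, ∑ x, P j x * Real.log (P j x / Pb x)
      = (∑ x, P j x * Real.log (P j x / w k x)) + ∑ x, P j x * Real.log (w k x / Pb x) := by
    intro k j hj
    rw [← Finset.sum_add_distrib]
    refine Finset.sum_congr rfl fun x _ => ?_
    by_cases h0 : P j x = 0
    · simp [h0]
    · have hPjx : 0 < P j x := lt_of_le_of_ne (hP0 j x) (Ne.symm h0)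
      have hck : 0 < c k := hckpos k ⟨j, hj⟩
      have h1 : P j x ≤ c k * w k x := by
        rw [hcw k x]
        exact Finset.single_le_sum (fun j' _ => hP0 j' x) hj
      have hwk : 0 < w k x := by
        rcases (hw0 k x).lt_or_eq with h | h
        · exact h
        · exfalso
          rw [← h, mul_zero] at h1
          linarith
      have hPbx : 0 < Pb x := by
        rw [hPb]
        exact div_pos (lt_of_lt_of_le hPjx
          (Finset.single_le_sum (fun j' _ => hP0 j' x) (Finset.mem_univ j))) hL
      rw [Real.log_div h0 hPbx.ne', Real.log_div h0 hwk.ne', Real.log_div hwk.ne' hPbx.ne']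
      ring
  have step2Y : ∀ k, ∀ j ∈ S k, ∑ y, Q j y * Real.log (Q j y / pb y)
      = (∑ y, Q j y * Real.log (Q j y / v k y)) + ∑ y, Q j y * Real.log (v k y / pb y) := by
    intro k j hj
    rw [← Finset.sum_add_distrib]
    refine Finset.sum_congr rfl fun y _ => ?_
    by_cases h0 : Q j y = 0
    · simp [h0]
    · have hQjy : 0 < Q j y := lt_of_le_of_ne (hQ0 j y) (Ne.symm h0)
      have hck : 0 < c k := hckpos k ⟨j, hj⟩
      have h1 : Q j y ≤ c k * v k y := by
        rw [hcv k y]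
        exact Finset.single_le_sum (fun j' _ => hQ0 j' y) hj
      have hvk : 0 < v k y := by
        rcases (hv0 k y).lt_or_eq with h | h
        · exact h
        · exfalso
          rw [← h, mul_zero] at h1
          linarith
      have hpby : 0 < pb y := by
        rw [hpb]
        exact div_pos (lt_of_lt_of_le hQjy
          (Finset.single_le_sum (fun j' _ => hQ0 j' y) (Finset.mem_univ j))) hL
      rw [Real.log_div h0 hpby.ne', Real.log_div h0 hvk.ne', Real.log_div hvk.ne' hpby.ne']
      ring
  have step3X : ∀ k, ∑ j ∈ S k, ∑ x, P j x * Real.log (w k x / Pb x)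
      = ∑ x, (c k * w k x) * Real.log (w k x / Pb x) := by
    intro k
    rw [Finset.sum_comm]
    refine Finset.sum_congr rfl fun x _ => ?_
    rw [← Finset.sum_mul, hcw k x]
  have step3Y : ∀ k, ∑ j ∈ S k, ∑ y, Q j y * Real.log (v k y / pb y)
      = ∑ y, (c k * v k y) * Real.log (v k y / pb y) := by
    intro k
    rw [Finset.sum_comm]
    refine Finset.sum_congr rfl fun y _ => ?_
    rw [← Finset.sum_mul, hcv k y]
  -- data processing inequality per class
  have boundA : ∀ k, ∑ j ∈ S k, ∑ x, P j x * Real.log (P j x / w k x)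
      ≤ ∑ j ∈ S k, ∑ y, Q j y * Real.log (Q j y / v k y) := by
    intro k
    refine Finset.sum_le_sum fun j hj => ?_
    have hrj : r j = k := hmem k j hj
    have heq : ∑ x, P j x * Real.log (P j x / w k x)
        = ∑ x, (B k).mulVec (Q j) x
            * Real.log ((B k).mulVec (Q j) x / (B k).mulVec (v k) x) := by
      refine Finset.sum_congr rfl fun x _ => ?_
      rw [hP j x, hrj, hwdef k x, ← mulVec_apply]
    rw [heq]
    exact dpi_kl (B k) (hB0' k j hj) (hB1' k ⟨j, hj⟩) (Q j) (v k)
      (hQ0 j) (hv0 k) (fun y hy => habs_v k j hj y hy)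
  -- bound on the class-average relative entropy
  have boundB : ∀ k, ∑ x, (c k * w k x) * Real.log (w k x / Pb x)
      ≤ c k * Real.log ((ℓ:ℝ) / c k) := by
    intro k
    rcases Finset.eq_empty_or_nonempty (S k) with he | hne
    · have hc : c k = 0 := by rw [hcdef, he]; simp
      simp [hc]
    · have hck : 0 < c k := hckpos k hne
      have hle : ∀ x ∈ (univ : Finset (Fin nX)),
          (c k * w k x) * Real.log (w k x / Pb x)
            ≤ (c k * w k x) * Real.log ((ℓ:ℝ) / c k) := by
        intro x _
        by_cases hw0' : w k x = 0
        · simp [hw0']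
        · have hwx : 0 < w k x := lt_of_le_of_ne (hw0 k x) (Ne.symm hw0')
          have hcwle : c k * w k x ≤ (ℓ:ℝ) * Pb x := by
            rw [hcw k x, hLPb x]
            exact hsubset k x
          have hPbx : 0 < Pb x := by
            rcases (hPb0 x).lt_or_eq with h | h
            · exact h
            · exfalso
              rw [← h, mul_zero] at hcwle
              nlinarith [mul_pos hck hwx]
          refine mul_le_mul_of_nonneg_left ?_ (by positivity)
          have harg : w k x / Pb x ≤ (ℓ:ℝ) / c k := by
            rw [div_le_div_iff₀ hPbx hck]
            nlinarith
          exact (Real.log_le_log_iff (by positivity) (by positivity)).mpr harg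
      calc ∑ x, (c k * w k x) * Real.log (w k x / Pb x)
          ≤ ∑ x, (c k * w k x) * Real.log ((ℓ:ℝ) / c k) := Finset.sum_le_sum hle
        _ = c k * Real.log ((ℓ:ℝ) / c k) := by
            rw [← Finset.sum_mul, ← Finset.mul_sum, hws k hne, mul_one]
  -- sum of class sizes
  have hsc : ∑ k, c k = (ℓ:ℝ) := by
    have h := Finset.sum_fiberwise (univ : Finset (Fin ℓ)) r (fun _ => (1:ℝ))
    calc ∑ k, c k = ∑ k, ∑ j ∈ univ.filter (fun j => r j = k), (1:ℝ) := by
          refine Finset.sum_congr rfl fun k _ => ?_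
          rw [hcdef, hSdef, Finset.sum_const, nsmul_eq_mul, mul_one]
      _ = ∑ j : Fin ℓ, (1:ℝ) := h
      _ = (ℓ:ℝ) := hone
  -- entropy of the class distribution is at most log d
  have boundC : ∑ k, c k * Real.log ((ℓ:ℝ) / c k) ≤ (ℓ:ℝ) * Real.log d := by
    have h0 := log_sum_ineq (univ : Finset (Fin d)) c (fun _ => (ℓ:ℝ)/d)
      (fun k _ => hc0 k) (fun k _ => by positivity)
      (fun k _ h => absurd h (by show ((ℓ:ℝ)/d) ≠ 0; positivity))
    have hsb : ∑ _k : Fin d, (ℓ:ℝ)/d = (ℓ:ℝ) := by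
      rw [Finset.sum_const, Finset.card_univ, Fintype.card_fin, nsmul_eq_mul]
      field_simp
    rw [hsc, hsb, div_self hL.ne', Real.log_one, mul_zero] at h0
    have hexp : ∑ k, c k * Real.log ((ℓ:ℝ)/c k)
        = (∑ k, c k * Real.log d) - ∑ k, c k * Real.log (c k / ((ℓ:ℝ)/d)) := by
      rw [← Finset.sum_sub_distrib]
      refine Finset.sum_congr rfl fun k _ => ?_
      by_cases hk : c k = 0
      · simp [hk]
      · rw [Real.log_div hL.ne' hk, Real.log_div hk (by positivity : ((ℓ:ℝ)/d) ≠ 0),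
          Real.log_div hL.ne' hd'.ne']
        ring
    have hsum2 : ∑ k, c k * Real.log d = (ℓ:ℝ) * Real.log d := by
      rw [← Finset.sum_mul, hsc]
    have h0' : 0 ≤ ∑ k, c k * Real.log (c k / ((ℓ:ℝ)/d)) := h0
    rw [hexp, hsum2]
    linarith
  -- nonnegativity of the Y-side class relative entropies
  have boundD : ∀ k, 0 ≤ ∑ y, (c k * v k y) * Real.log (v k y / pb y) := by
    intro k
    rcases Finset.eq_empty_or_nonempty (S k) with he | hne
    · have hc : c k = 0 := by rw [hcdef, he]; simp
      simp [hc]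
    · have hck := hckpos k hne
      have h0 := log_sum_ineq (univ : Finset (Fin nY)) (v k) pb
        (fun y _ => hv0 k y) (fun y _ => hpb0 y) (fun y _ h => habs_pbv k y h)
      rw [hvs k hne, hpbs, div_one, Real.log_one, mul_zero] at h0
      have heq : ∑ y, (c k * v k y) * Real.log (v k y / pb y)
          = c k * ∑ y, v k y * Real.log (v k y / pb y) := by
        rw [Finset.mul_sum]
        exact Finset.sum_congr rfl fun y _ => by ring
      rw [heq]
      exact mul_nonneg hck.le h0
  -- put everything together
  calc ∑ j, ∑ x, P j x * Real.log (P j x / Pb x)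
      = ∑ k, ∑ j ∈ S k, ∑ x, P j x * Real.log (P j x / Pb x) := stepPartX.symm
    _ = ∑ k, ((∑ j ∈ S k, ∑ x, P j x * Real.log (P j x / w k x))
          + ∑ x, (c k * w k x) * Real.log (w k x / Pb x)) := by
        refine Finset.sum_congr rfl fun k _ => ?_
        rw [← step3X k, ← Finset.sum_add_distrib]
        exact Finset.sum_congr rfl fun j hj => step2X k j hj
    _ ≤ ∑ k, ((∑ j ∈ S k, ∑ y, Q j y * Real.log (Q j y / v k y))
          + c k * Real.log ((ℓ:ℝ) / c k)) :=
        Finset.sum_le_sum fun k _ => add_le_add (boundA k) (boundB k)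
    _ = (∑ k, ∑ j ∈ S k, ∑ y, Q j y * Real.log (Q j y / v k y))
          + ∑ k, c k * Real.log ((ℓ:ℝ) / c k) := Finset.sum_add_distrib
    _ ≤ (∑ k, ∑ j ∈ S k, ∑ y, Q j y * Real.log (Q j y / v k y)) + (ℓ:ℝ) * Real.log d := by
        linarith [boundC]
    _ ≤ (∑ j, ∑ y, Q j y * Real.log (Q j y / pb y)) + (ℓ:ℝ) * Real.log d := by
        have hY : ∑ k, ∑ j ∈ S k, ∑ y, Q j y * Real.log (Q j y / v k y)
            ≤ ∑ j, ∑ y, Q j y * Real.log (Q j y / pb y) := by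
          rw [← stepPartY]
          refine Finset.sum_le_sum fun k _ => ?_
          have hsplit : ∑ j ∈ S k, ∑ y, Q j y * Real.log (Q j y / pb y)
              = (∑ j ∈ S k, ∑ y, Q j y * Real.log (Q j y / v k y))
                + ∑ y, (c k * v k y) * Real.log (v k y / pb y) := by
            rw [← step3Y k, ← Finset.sum_add_distrib]
            exact Finset.sum_congr rfl fun j hj => step2Y k j hj
          rw [hsplit]
          linarith [boundD k]
        linarith

/-- If X is obtained from Y by applying a stochastic matrix A_j that depends on
the uniform index J = j only through d distinct values B_1,...,B_d, then
I(X:J) ≤ I(Y:J) + log₂ d. -/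
theorem mutual_info_increase_bounded_by_log_classes
    (ℓ d nX nY : ℕ) (hℓ : 0 < ℓ) (hd : 0 < d)
    (Q : Fin ℓ → Fin nY → ℝ)
    (hQ0 : ∀ j y, 0 ≤ Q j y) (hQ1 : ∀ j, ∑ y, Q j y = 1)
    (A : Fin ℓ → Matrix (Fin nX) (Fin nY) ℝ)
    (hA0 : ∀ j x y, 0 ≤ A j x y) (hA1 : ∀ j y, ∑ x, A j x y = 1)
    (B : Fin d → Matrix (Fin nX) (Fin nY) ℝ) (r : Fin ℓ → Fin d)
    (hclass : ∀ j, A j = B (r j)) :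
    ent2 (fun x => (1 / (ℓ : ℝ)) * ∑ j, (A j).mulVec (Q j) x)
        - (1 / (ℓ : ℝ)) * ∑ j, ent2 ((A j).mulVec (Q j))
      ≤ ent2 (fun y => (1 / (ℓ : ℝ)) * ∑ j, Q j y)
          - (1 / (ℓ : ℝ)) * ∑ j, ent2 (Q j)
        + Real.logb 2 d := by
  classical
  have hL : (0:ℝ) < ℓ := by exact_mod_cast hℓ
  have hlog2 : (0:ℝ) < Real.log 2 := Real.log_pos (by norm_num)
  have hP0 : ∀ j x, 0 ≤ (A j).mulVec (Q j) x := by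
    intro j x
    rw [mulVec_apply]
    exact Finset.sum_nonneg fun y _ => mul_nonneg (hA0 j x y) (hQ0 j y)
  have hB0' : ∀ j x y, 0 ≤ B (r j) x y := fun j x y => hclass j ▸ hA0 j x y
  have hB1' : ∀ j y, ∑ x, B (r j) x y = 1 := fun j y => by rw [← hclass]; exact hA1 j y
  -- the key inequality in natural-log, relative-entropy form
  have key : ∑ j, ∑ x, (A j).mulVec (Q j) x
        * Real.log ((A j).mulVec (Q j) x / ((1 / (ℓ:ℝ)) * ∑ j', (A j').mulVec (Q j') x))
      ≤ (∑ j, ∑ y, Q j y * Real.log (Q j y / ((1 / (ℓ:ℝ)) * ∑ j', Q j' y)))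
        + (ℓ:ℝ) * Real.log d :=
    key_ineq ℓ d nX nY hℓ hd Q hQ0 hQ1 B r hB0' hB1'
      (fun j => (A j).mulVec (Q j))
      (fun j x => by
        show (A j).mulVec (Q j) x = (B (r j)).mulVec (Q j) x
        rw [hclass])
      (fun x => (1 / (ℓ:ℝ)) * ∑ j', (A j').mulVec (Q j') x)
      (fun x => one_div_mul_eq_div _ _)
      (fun y => (1 / (ℓ:ℝ)) * ∑ j', Q j' y)
      (fun y => one_div_mul_eq_div _ _)
  have idX : ∑ j, ∑ x, (A j).mulVec (Q j) x
        * Real.log ((A j).mulVec (Q j) x / ((1 / (ℓ:ℝ)) * ∑ j', (A j').mulVec (Q j') x))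
      = (∑ j, ∑ x, (A j).mulVec (Q j) x * Real.log ((A j).mulVec (Q j) x))
        - (ℓ:ℝ) * ∑ x, ((1 / (ℓ:ℝ)) * ∑ j', (A j').mulVec (Q j') x)
            * Real.log ((1 / (ℓ:ℝ)) * ∑ j', (A j').mulVec (Q j') x) :=
    kl_expand hL (fun j => (A j).mulVec (Q j)) hP0
      (fun x => (1 / (ℓ:ℝ)) * ∑ j', (A j').mulVec (Q j') x)
      (fun x => one_div_mul_eq_div _ _)
  have idY : ∑ j, ∑ y, Q j y * Real.log (Q j y / ((1 / (ℓ:ℝ)) * ∑ j', Q j' y))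
      = (∑ j, ∑ y, Q j y * Real.log (Q j y))
        - (ℓ:ℝ) * ∑ y, ((1 / (ℓ:ℝ)) * ∑ j', Q j' y)
            * Real.log ((1 / (ℓ:ℝ)) * ∑ j', Q j' y) :=
    kl_expand hL Q hQ0
      (fun y => (1 / (ℓ:ℝ)) * ∑ j', Q j' y)
      (fun y => one_div_mul_eq_div _ _)
  rw [idX, idY] at key
  -- abbreviations
  set EX := ∑ j, ∑ x, (A j).mulVec (Q j) x * Real.log ((A j).mulVec (Q j) x) with hEX
  set GX := ∑ x, ((1 / (ℓ:ℝ)) * ∑ j', (A j').mulVec (Q j') x)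
      * Real.log ((1 / (ℓ:ℝ)) * ∑ j', (A j').mulVec (Q j') x) with hGX
  set EY := ∑ j, ∑ y, Q j y * Real.log (Q j y) with hEY
  set GY := ∑ y, ((1 / (ℓ:ℝ)) * ∑ j', Q j' y)
      * Real.log ((1 / (ℓ:ℝ)) * ∑ j', Q j' y) with hGY
  have key2 : EX / (ℓ:ℝ) - GX ≤ EY / (ℓ:ℝ) - GY + Real.log d := by
    have e1 : (EX - (ℓ:ℝ) * GX) / (ℓ:ℝ) = EX / (ℓ:ℝ) - GX := by
      rw [sub_div, mul_div_cancel_left₀ _ hL.ne']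
    have e2 : (EY - (ℓ:ℝ) * GY + (ℓ:ℝ) * Real.log d) / (ℓ:ℝ)
        = EY / (ℓ:ℝ) - GY + Real.log d := by
      rw [add_div, sub_div, mul_div_cancel_left₀ _ hL.ne', mul_div_cancel_left₀ _ hL.ne']
    rw [← e1, ← e2]
    exact (div_le_div_iff_of_pos_right hL).mpr key
  -- now express the goal in natural-log form
  have eX : ent2 (fun x => (1 / (ℓ:ℝ)) * ∑ j, (A j).mulVec (Q j) x) = -GX / Real.log 2 :=
    ent2_eq _
  have eY : ent2 (fun y => (1 / (ℓ:ℝ)) * ∑ j, Q j y) = -GY / Real.log 2 := ent2_eq _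
  have eJX : ∑ j, ent2 ((A j).mulVec (Q j)) = -EX / Real.log 2 := by
    calc ∑ j, ent2 ((A j).mulVec (Q j))
        = ∑ j, -(∑ x, (A j).mulVec (Q j) x * Real.log ((A j).mulVec (Q j) x)) / Real.log 2 :=
          Finset.sum_congr rfl fun j _ => ent2_eq _
      _ = -EX / Real.log 2 := by
          rw [← Finset.sum_div, ← Finset.sum_neg_distrib]
  have eJY : ∑ j, ent2 (Q j) = -EY / Real.log 2 := by
    calc ∑ j, ent2 (Q j)
        = ∑ j, -(∑ y, Q j y * Real.log (Q j y)) / Real.log 2 :=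
          Finset.sum_congr rfl fun j _ => ent2_eq _
      _ = -EY / Real.log 2 := by
          rw [← Finset.sum_div, ← Finset.sum_neg_distrib]
  have eD : Real.logb 2 (d:ℝ) = Real.log d / Real.log 2 := (Real.log_div_log).symm
  rw [eX, eY, eJX, eJY, eD]
  have final : (EX / (ℓ:ℝ) - GX) / Real.log 2 ≤ (EY / (ℓ:ℝ) - GY + Real.log d) / Real.log 2 :=
    (div_le_div_iff_of_pos_right hlog2).mpr key2
  have gL : -GX / Real.log 2 - (1 / (ℓ:ℝ)) * (-EX / Real.log 2)
      = (EX / (ℓ:ℝ) - GX) / Real.log 2 := by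
    field_simp
    ring
  have gR : -GY / Real.log 2 - (1 / (ℓ:ℝ)) * (-EY / Real.log 2) + Real.log d / Real.log 2
      = (EY / (ℓ:ℝ) - GY + Real.log d) / Real.log 2 := by
    field_simp
    ring
  rw [gL, gR]
  exact final
end

section
/- Let p be a continuously differentiable, strictly positive probability density on ℝ with finite Fisher information F(p) = ∫ (p'(x)/p(x))² p(x) dx, and let q be a Gaussian density with variance v > 0. Then the convolution p * q satisfies F(p * q) ≤ F(p). -/
open Real MeasureTheory
open Filter Set NNReal

lemma my_integral_cauchy_schwarz (f g : ℝ → ℝ) (hf0 : ∀ x, 0 ≤ f x) (hg0 : ∀ x, 0 ≤ g x)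
    (hfm : AEStronglyMeasurable f volume) (hgm : AEStronglyMeasurable g volume)
    (hf2 : Integrable (fun x => f x ^ 2)) (hg2 : Integrable (fun x => g x ^ 2)) :
    (∫ x, f x * g x) ^ 2 ≤ (∫ x, f x ^ 2) * ∫ x, g x ^ 2 := by
  have hpq : Real.HolderConjugate 2 2 := by rw [Real.holderConjugate_iff]; norm_num
  have hfL : MemLp f (ENNReal.ofReal 2) volume := by
    rw [show ENNReal.ofReal 2 = 2 by norm_num]
    exact (memLp_two_iff_integrable_sq hfm).mpr hf2
  have hgL : MemLp g (ENNReal.ofReal 2) volume := by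
    rw [show ENNReal.ofReal 2 = 2 by norm_num]
    exact (memLp_two_iff_integrable_sq hgm).mpr hg2
  have h := integral_mul_le_Lp_mul_Lq_of_nonneg hpq (Eventually.of_forall hf0)
    (Eventually.of_forall hg0) hfL hgL
  simp only [Real.rpow_two] at h
  have hA : 0 ≤ ∫ x, f x ^ 2 := integral_nonneg fun x => sq_nonneg _
  have hB : 0 ≤ ∫ x, g x ^ 2 := integral_nonneg fun x => sq_nonneg _
  have h0 : 0 ≤ ∫ x, f x * g x := integral_nonneg fun x => mul_nonneg (hf0 x) (hg0 x)
  have h2 := pow_le_pow_left₀ h0 h 2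
  calc (∫ x, f x * g x) ^ 2 ≤ ((∫ x, f x ^ 2) ^ (1/2:ℝ) * (∫ x, g x ^ 2) ^ (1/2:ℝ)) ^ 2 := h2
    _ = (∫ x, f x ^ 2) * ∫ x, g x ^ 2 := by
        rw [mul_pow, ← Real.rpow_natCast ((∫ x, f x ^ 2) ^ (1/2:ℝ)) 2,
          ← Real.rpow_natCast ((∫ x, g x ^ 2) ^ (1/2:ℝ)) 2,
          ← Real.rpow_mul hA, ← Real.rpow_mul hB]
        norm_num



/-- Convolution with a Gaussian density does not increase Fisher information. -/
theorem fisher_info_convolution_gaussian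
    (p : ℝ → ℝ) (hp : ContDiff ℝ 1 p) (hp0 : ∀ x, 0 < p x)
    (hp1 : ∫ x, p x = 1)
    (hFp : Integrable (fun x => (deriv p x / p x) ^ 2 * p x))
    (v : ℝ) (hv : 0 < v) (m : ℝ)
    (q : ℝ → ℝ)
    (hq : ∀ y, q y = (1 / Real.sqrt (2 * π * v)) *
      Real.exp (-(y - m) ^ 2 / (2 * v)))
    (c : ℝ → ℝ) (hc : ∀ y, c y = ∫ x, p x * q (y - x)) :
    ∫ y, (deriv c y / c y) ^ 2 * c y
      ≤ ∫ x, (deriv p x / p x) ^ 2 * p x := by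
  have hπ : (0:ℝ) < π := Real.pi_pos
  have hpc : Continuous p := hp.continuous
  have hp'c : Continuous (deriv p) := hp.continuous_deriv le_rfl
  have hpne : ∀ x, p x ≠ 0 := fun x => (hp0 x).ne'
  have hpd : ∀ x, HasDerivAt p (deriv p x) x := fun x =>
    ((hp.differentiable one_ne_zero) x).hasDerivAt
  have hpi : Integrable p := by
    by_contra h
    rw [integral_undef h] at hp1; norm_num at hp1
  set s : ℝ → ℝ := fun x => deriv p x / p x with hs_def
  have hsc : Continuous s := hp'c.div hpc hpne
  have hsp : ∀ x, deriv p x = s x * p x := fun x => by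
    simp only [hs_def]
    rw [div_mul_cancel₀ _ (hpne x)]
  have hFp' : Integrable (fun x => s x ^ 2 * p x) := hFp
  have hIp' : Integrable (deriv p) := by
    refine (hFp'.add hpi).mono' hp'c.aestronglyMeasurable (Eventually.of_forall fun x => ?_)
    simp only [Pi.add_apply]
    rw [Real.norm_eq_abs, hsp x, abs_mul, abs_of_pos (hp0 x)]
    nlinarith [sq_nonneg (|s x| - 1), sq_abs (s x), abs_nonneg (s x), (hp0 x).le,
      mul_le_mul_of_nonneg_right (by nlinarith [sq_nonneg (|s x| - 1), sq_abs (s x)] :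
        |s x| ≤ s x ^ 2 + 1) (hp0 x).le]
  -- Gaussian facts
  set B : ℝ := (Real.sqrt (2 * π * v))⁻¹ with hB
  have hBpos : 0 < B := inv_pos.mpr (Real.sqrt_pos.mpr (by positivity))
  have hqf : q = fun y => B * Real.exp (-(y - m) ^ 2 / (2 * v)) :=
    funext fun y => by rw [hq y, one_div]
  have hqpos : ∀ y, 0 < q y := fun y => by rw [hqf]; positivity
  have hqc : Continuous q := by
    rw [hqf]
    exact continuous_const.mul (Real.continuous_exp.comp
      (((continuous_id.sub continuous_const).pow 2).neg.div_const _))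
  have hqB : ∀ y, q y ≤ B := by
    intro y
    rw [hqf]
    have h1 : Real.exp (-(y - m) ^ 2 / (2 * v)) ≤ 1 := by
      refine Real.exp_le_one_iff.mpr ?_
      rw [neg_div]
      have := div_nonneg (sq_nonneg (y - m)) (by linarith : (0:ℝ) ≤ 2 * v)
      linarith
    show B * Real.exp (-(y - m) ^ 2 / (2 * v)) ≤ B
    nlinarith
  set V : ℝ≥0 := ⟨v, hv.le⟩ with hV
  have hVne : V ≠ 0 := (show (0:ℝ≥0) < V by exact_mod_cast hv).ne'
  have hqg : q = ProbabilityTheory.gaussianPDFReal m V := by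
    funext y
    rw [hq y, ProbabilityTheory.gaussianPDFReal, one_div]
    norm_num [hV]
    rfl
  have hqi : Integrable q := by
    rw [hqg]; exact ProbabilityTheory.integrable_gaussianPDFReal m V
  have hq1 : ∫ y, q y = 1 := by
    rw [hqg]; exact ProbabilityTheory.integral_gaussianPDFReal_eq_one m hVne
  -- derivative of q
  set q' : ℝ → ℝ := fun z => ((m - z) / v) * q z with hq'def
  have hq'c : Continuous q' :=
    ((continuous_const.sub continuous_id).div_const v).mul hqc
  have hq'd : ∀ z, HasDerivAt q (q' z) z := by
    intro z
    rw [hqf]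
    have h0 : HasDerivAt (fun y : ℝ => (y - m)) 1 z := (hasDerivAt_id z).sub_const m
    have h1 : HasDerivAt (fun y : ℝ => -(y - m) ^ 2 / (2 * v)) ((m - z) / v) z := by
      have h2 := ((h0.pow 2).neg).div_const (2 * v)
      refine h2.congr_deriv ?_
      simp only [Nat.cast_ofNat]
      field_simp
      ring
    have h3 := (Real.hasDerivAt_exp (-(z - m) ^ 2 / (2 * v))).comp z h1
    have h4 := h3.const_mul B
    refine h4.congr_deriv ?_
    simp only [hq'def, hqf, Function.comp_def]
    ring
  -- bound on q'
  set K : ℝ := B / v * (Real.sqrt (2 * v) / 2) with hK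
  have habs : ∀ u : ℝ, |u| * Real.exp (-u ^ 2 / (2 * v)) ≤ Real.sqrt (2 * v) / 2 := by
    intro u
    set w := Real.sqrt (2 * v) with hw
    have hw0 : 0 < w := Real.sqrt_pos.mpr (by linarith)
    have hw2 : w ^ 2 = 2 * v := Real.sq_sqrt (by linarith)
    have hexp := Real.add_one_le_exp (u ^ 2 / (2 * v))
    have hept : 0 < Real.exp (u ^ 2 / (2 * v)) := Real.exp_pos _
    have h1 : u ^ 2 + 2 * v ≤ 2 * v * Real.exp (u ^ 2 / (2 * v)) := by
      have h2 := mul_le_mul_of_nonneg_left hexp (by linarith : (0:ℝ) ≤ 2 * v)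
      calc u ^ 2 + 2 * v = 2 * v * (u ^ 2 / (2 * v) + 1) := by field_simp
        _ ≤ _ := h2
    have key : 2 * |u| ≤ w * Real.exp (u ^ 2 / (2 * v)) := by
      nlinarith [sq_nonneg (|u| - w), sq_abs u, mul_le_mul_of_nonneg_left h1 hw0.le,
        mul_pos hw0 hw0, sq_nonneg w]
    rw [show -u ^ 2 / (2 * v) = -(u ^ 2 / (2 * v)) by ring, Real.exp_neg]
    rw [← div_eq_mul_inv, div_le_iff₀ hept]
    nlinarith [key]
  have hq'B : ∀ z, |q' z| ≤ K := by
    intro z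
    have h := habs (z - m)
    have heq : |q' z| = B / v * (|z - m| * Real.exp (-(z - m) ^ 2 / (2 * v))) := by
      simp only [hq'def, hqf]
      rw [abs_mul, abs_div, abs_of_pos hv, abs_mul, abs_of_pos hBpos,
        abs_of_pos (Real.exp_pos _), abs_sub_comm m z]
      ring
    rw [heq, hK]
    exact mul_le_mul_of_nonneg_left h (by positivity)
  -- convolution integrand integrable
  have hconv_int : ∀ y, Integrable (fun x => p x * q (y - x)) := by
    intro y
    refine (hpi.const_mul B).mono'
      ((hpc.mul (hqc.comp (continuous_const.sub continuous_id))).aestronglyMeasurable)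
      (Eventually.of_forall fun x => ?_)
    rw [Real.norm_eq_abs, abs_mul, abs_of_pos (hp0 x), abs_of_pos (hqpos _)]
    calc p x * q (y - x) ≤ p x * B := mul_le_mul_of_nonneg_left (hqB _) (hp0 x).le
      _ = B * p x := mul_comm _ _
  -- c is positive
  have hcpos : ∀ y, 0 < c y := by
    intro y
    rw [hc y]
    refine (integral_pos_iff_support_of_nonneg
      (fun x => mul_nonneg (hp0 x).le (hqpos _).le) (hconv_int y)).mpr ?_
    have hsupp : (Function.support fun x => p x * q (y - x)) = Set.univ :=
      Set.eq_univ_of_forall fun x => (mul_pos (hp0 x) (hqpos _)).ne'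
    rw [hsupp, Real.volume_univ]
    simp
  -- derivative of c
  have hcd : ∀ y, HasDerivAt c (∫ x, p x * q' (y - x)) y := by
    intro y
    have h := hasDerivAt_integral_of_dominated_loc_of_deriv_le (μ := volume)
      (F := fun n x => p x * q (n - x)) (F' := fun n x => p x * q' (n - x))
      (bound := fun x => K * p x) (x₀ := y) (s := Metric.ball y 1) (Metric.ball_mem_nhds y one_pos)
      (Eventually.of_forall fun y' => (hconv_int y').aestronglyMeasurable)
      (hconv_int y)
      ((hpc.mul (hq'c.comp (continuous_const.sub continuous_id))).aestronglyMeasurable)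
      (Eventually.of_forall fun x => fun y' _ => ?_)
      (hpi.const_mul K)
      (Eventually.of_forall fun x => fun y' _ => ?_)
    · exact h.2.congr_of_eventuallyEq (Eventually.of_forall fun t => hc t)
    · rw [Real.norm_eq_abs, abs_mul, abs_of_pos (hp0 x)]
      calc p x * |q' (y' - x)| ≤ p x * K := mul_le_mul_of_nonneg_left (hq'B _) (hp0 x).le
        _ = K * p x := mul_comm _ _
    · have := ((hq'd (y' - x)).comp y' ((hasDerivAt_id y').sub_const x)).const_mul (p x)
      simpa using this
  -- integration by parts
  have hIBP : ∀ y, ∫ x, p x * q' (y - x) = ∫ x, deriv p x * q (y - x) := by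
    intro y
    have hvd : ∀ x : ℝ, HasDerivAt (fun t => q (y - t)) (-q' (y - x)) x := by
      intro x
      have := (hq'd (y - x)).comp x ((hasDerivAt_const x y).sub (hasDerivAt_id x))
      simpa [Function.comp_def] using this
    have huv'0 : Integrable (fun x => p x * -q' (y - x)) := by
      refine (hpi.const_mul K).mono'
        (Continuous.aestronglyMeasurable (by fun_prop))
        (Eventually.of_forall fun x => ?_)
      rw [Real.norm_eq_abs, abs_mul, abs_neg, abs_of_pos (hp0 x)]
      calc p x * |q' (y - x)| ≤ p x * K := mul_le_mul_of_nonneg_left (hq'B _) (hp0 x).le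
        _ = K * p x := mul_comm _ _
    have huv' : Integrable (p * fun x => -q' (y - x)) := huv'0
    have hu'v0 : Integrable (fun x => deriv p x * q (y - x)) := by
      refine (hIp'.norm.const_mul B).mono'
        (Continuous.aestronglyMeasurable (by fun_prop))
        (Eventually.of_forall fun x => ?_)
      rw [Real.norm_eq_abs, abs_mul, abs_of_pos (hqpos _)]
      calc |deriv p x| * q (y - x) ≤ |deriv p x| * B :=
            mul_le_mul_of_nonneg_left (hqB _) (abs_nonneg _)
        _ = B * ‖deriv p x‖ := by rw [Real.norm_eq_abs]; ring
    have hu'v : Integrable (deriv p * fun x => q (y - x)) := hu'v0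
    have huv : Integrable (p * fun x => q (y - x)) := hconv_int y
    have h := integral_mul_deriv_eq_deriv_mul_of_integrable (fun x _ => hpd x) (fun x _ => hvd x) huv' hu'v huv
    simp only [mul_neg] at h
    rw [integral_neg] at h
    linarith [h]
  -- integrand for the upper bound
  have hgmeas : ∀ y, Continuous (fun x => p x * q (y - x)) := fun y =>
    hpc.mul (hqc.comp (continuous_const.sub continuous_id))
  have hs2g_int : ∀ y, Integrable (fun x => s x ^ 2 * (p x * q (y - x))) := by
    intro y
    refine (hFp'.const_mul B).mono'
      (Continuous.aestronglyMeasurable (by fun_prop)) (Eventually.of_forall fun x => ?_)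
    rw [Real.norm_eq_abs, abs_of_nonneg
      (mul_nonneg (sq_nonneg _) (mul_nonneg (hp0 x).le (hqpos _).le))]
    have h1 : q (y - x) ≤ B := hqB _
    nlinarith [mul_le_mul_of_nonneg_left h1 (mul_nonneg (sq_nonneg (s x)) (hp0 x).le)]
  -- pointwise Jensen bound
  have hkey : ∀ y, (deriv c y / c y) ^ 2 * c y ≤ ∫ x, s x ^ 2 * (p x * q (y - x)) := by
    intro y
    have hcy := hcpos y
    have hdc : deriv c y = ∫ x, s x * (p x * q (y - x)) := by
      rw [(hcd y).deriv, hIBP y]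
      congr 1
      funext x
      rw [hsp x]; ring
    set f1 : ℝ → ℝ := fun x => |s x| * Real.sqrt (p x * q (y - x)) with hf1
    set f2 : ℝ → ℝ := fun x => Real.sqrt (p x * q (y - x)) with hf2
    have hpq0 : ∀ x, 0 ≤ p x * q (y - x) := fun x => mul_nonneg (hp0 x).le (hqpos _).le
    have hf1sq : (fun x => f1 x ^ 2) = fun x => s x ^ 2 * (p x * q (y - x)) := by
      funext x
      rw [hf1, mul_pow, sq_abs, Real.sq_sqrt (hpq0 x)]
    have hf2sq : (fun x => f2 x ^ 2) = fun x => p x * q (y - x) := by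
      funext x
      rw [hf2, Real.sq_sqrt (hpq0 x)]
    have hcs := my_integral_cauchy_schwarz f1 f2
      (fun x => mul_nonneg (abs_nonneg _) (Real.sqrt_nonneg _))
      (fun x => Real.sqrt_nonneg _)
      (Continuous.aestronglyMeasurable (by fun_prop))
      (Continuous.aestronglyMeasurable (by fun_prop))
      (hf1sq ▸ hs2g_int y) (hf2sq ▸ hconv_int y)
    rw [hf1sq, hf2sq] at hcs
    have hprod : ∀ x, f1 x * f2 x = |s x * (p x * q (y - x))| := by
      intro x
      rw [hf1, hf2, mul_assoc, Real.mul_self_sqrt (hpq0 x), abs_mul,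
        abs_of_nonneg (hpq0 x)]
    have habs1 : |deriv c y| ≤ ∫ x, f1 x * f2 x := by
      rw [hdc]
      calc |∫ x, s x * (p x * q (y - x))| ≤ ∫ x, |s x * (p x * q (y - x))| :=
            by simpa only [Real.norm_eq_abs] using
              norm_integral_le_integral_norm (fun x => s x * (p x * q (y - x)))
        _ = ∫ x, f1 x * f2 x := by
            congr 1
            funext x
            rw [hprod x]
    have hd2 : deriv c y ^ 2 ≤ (∫ x, s x ^ 2 * (p x * q (y - x))) * c y := by
      have h1 : deriv c y ^ 2 ≤ (∫ x, f1 x * f2 x) ^ 2 := by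
        rw [← sq_abs (deriv c y)]
        exact pow_le_pow_left₀ (abs_nonneg _) habs1 2
      calc deriv c y ^ 2 ≤ (∫ x, f1 x * f2 x) ^ 2 := h1
        _ ≤ (∫ x, s x ^ 2 * (p x * q (y - x))) * ∫ x, p x * q (y - x) := hcs
        _ = (∫ x, s x ^ 2 * (p x * q (y - x))) * c y := by rw [← hc y]
    have hrw : (deriv c y / c y) ^ 2 * c y = deriv c y ^ 2 / c y := by
      field_simp
    rw [hrw, div_le_iff₀ hcy]
    exact hd2
  -- Fubini
  set Φ : ℝ × ℝ → ℝ := fun z => s z.2 ^ 2 * (p z.2 * q (z.1 - z.2)) with hΦ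
  have hΦc : Continuous Φ := by fun_prop
  have hΦint : Integrable Φ (volume.prod volume) := by
    rw [integrable_prod_iff' hΦc.aestronglyMeasurable]
    constructor
    · refine Eventually.of_forall fun x => ?_
      have h1 := (hqi.comp_sub_right x).const_mul (s x ^ 2 * p x)
      exact h1.congr (Eventually.of_forall fun y => by simp only [hΦ]; ring)
    · have heq : (fun x => ∫ y, ‖Φ (y, x)‖) = fun x => s x ^ 2 * p x := by
        funext x
        have h1 : (fun y => ‖Φ (y, x)‖) = fun y => (s x ^ 2 * p x) * q (y - x) := by
          funext y
          simp only [hΦ, Real.norm_eq_abs]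
          rw [abs_of_nonneg (mul_nonneg (sq_nonneg _) (mul_nonneg (hp0 x).le (hqpos _).le))]
          ring
        rw [h1, integral_const_mul, integral_sub_right_eq_self q x, hq1, mul_one]
      rw [heq]
      exact hFp'
  have hR_int : Integrable (fun y => ∫ x, s x ^ 2 * (p x * q (y - x))) :=
    hΦint.integral_prod_left
  have hR_eq : (∫ y, ∫ x, s x ^ 2 * (p x * q (y - x))) = ∫ x, s x ^ 2 * p x := by
    rw [integral_integral_swap (f := fun y x => s x ^ 2 * (p x * q (y - x))) hΦint]
    congr 1
    funext x
    have h1 : (fun y => s x ^ 2 * (p x * q (y - x))) = fun y => (s x ^ 2 * p x) * q (y - x) := by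
      funext y; ring
    rw [h1, integral_const_mul, integral_sub_right_eq_self q x, hq1, mul_one]
  calc ∫ y, (deriv c y / c y) ^ 2 * c y
      ≤ ∫ y, ∫ x, s x ^ 2 * (p x * q (y - x)) :=
        integral_mono_of_nonneg
          (Eventually.of_forall fun y => mul_nonneg (sq_nonneg _) (hcpos y).le)
          hR_int (Eventually.of_forall hkey)
    _ = ∫ x, s x ^ 2 * p x := hR_eq
end
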